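/- Suppose that for every choice of finite-dimensional complex Hilbert spaces H₁, H₂, H₁', H₂' and every state σ on (H₁⊗H₂) ⊗ (H₁'⊗H₂') one has E_m(σ) ≥ E_m(tr_{H₁'⊗H₂'} σ) + E_m(tr_{H₁⊗H₂} σ) (with E_m computed across the 1–2 cuts). Then for all states ρ on H₁ ⊗ H₂ and ρ' on H₁' ⊗ H₂', E_m(ρ ⊗ ρ') = E_m(ρ) + E_m(ρ'), where E_m of ρ ⊗ ρ' is computed across the (H₁⊗H₁')–(H₂⊗H₂') cut. -/

import Mathlib

open Matrix Kronecker BigOperators ComplexOrder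
open Polynomial
set_option linter.unusedSectionVars false
set_option maxHeartbeats 1000000

noncomputable section

namespace QAdditivity

/-- von Neumann entropy of a matrix (junk value `0` if not Hermitian):
`S(ρ) = -∑ᵢ λᵢ log λᵢ` over the eigenvalues of `ρ`. -/
def entropy {ι : Type} [Fintype ι] [DecidableEq ι] (ρ : Matrix ι ι ℂ) : ℝ :=
  if h : ρ.IsHermitian then ∑ i, Real.negMulLog (h.eigenvalues i) else 0

/-- A state: positive semidefinite with trace one. -/
def IsState {ι : Type} [Fintype ι] (ρ : Matrix ι ι ℂ) : Prop :=
  ρ.PosSemidef ∧ ρ.trace = 1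

/-- A pure state: rank-one state, i.e. `|φ⟩⟨φ|` for a unit vector `φ`. -/
def IsPureState {ι : Type} [Fintype ι] (ρ : Matrix ι ι ℂ) : Prop :=
  ∃ φ : ι → ℂ, star φ ⬝ᵥ φ = 1 ∧ ρ = vecMulVec φ (star φ)

/-- Partial trace over the second tensor factor. -/
def trRight {ι κ : Type} [Fintype ι] [Fintype κ]
    (ρ : Matrix (ι × κ) (ι × κ) ℂ) : Matrix ι ι ℂ :=
  Matrix.of fun i j => ∑ k, ρ (i, k) (j, k)

/-- Partial trace over the first tensor factor. -/
def trLeft {ι κ : Type} [Fintype ι] [Fintype κ]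
    (ρ : Matrix (ι × κ) (ι × κ) ℂ) : Matrix κ κ ℂ :=
  Matrix.of fun k l => ∑ i, ρ (i, k) (i, l)

/-- Entanglement of a (pure) bipartite state: `E(π) = S(tr_{H₂} π)`. -/
def pureEnt {ι κ : Type} [Fintype ι] [Fintype κ] [DecidableEq ι]
    (π : Matrix (ι × κ) (ι × κ) ℂ) : ℝ :=
  entropy (trRight π)

/-- `E_m(ρ)`: minimum over finite pure-state ensembles for `ρ` of the minimal
entanglement appearing in the ensemble. -/
def Em {ι κ : Type} [Fintype ι] [Fintype κ] [DecidableEq ι]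
    (ρ : Matrix (ι × κ) (ι × κ) ℂ) : ℝ :=
  sInf { e : ℝ | ∃ (n : ℕ) (p : Fin (n + 1) → ℝ)
      (π : Fin (n + 1) → Matrix (ι × κ) (ι × κ) ℂ),
    (∀ i, 0 < p i) ∧ (∀ i, IsPureState (π i)) ∧
    (∑ i, (p i : ℂ) • π i) = ρ ∧
    e = Finset.univ.inf' Finset.univ_nonempty fun i => pureEnt (π i) }

/-- Entanglement of formation `E_f(ρ)`. -/
def Ef {ι κ : Type} [Fintype ι] [Fintype κ] [DecidableEq ι]
    (ρ : Matrix (ι × κ) (ι × κ) ℂ) : ℝ :=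
  sInf { e : ℝ | ∃ (n : ℕ) (p : Fin (n + 1) → ℝ)
      (π : Fin (n + 1) → Matrix (ι × κ) (ι × κ) ℂ),
    (∀ i, 0 < p i) ∧ (∀ i, IsPureState (π i)) ∧
    (∑ i, (p i : ℂ) • π i) = ρ ∧
    e = ∑ i, p i * pureEnt (π i) }

/-- Canonical reordering `(H₁⊗H₂)⊗(H₁'⊗H₂') ≃ (H₁⊗H₁')⊗(H₂⊗H₂')` on matrices. -/
def reorder {a b a' b' : Type}
    (M : Matrix ((a × b) × (a' × b')) ((a × b) × (a' × b')) ℂ) :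
    Matrix ((a × a') × (b × b')) ((a × a') × (b × b')) ℂ :=
  Matrix.reindex (Equiv.prodProdProdComm a b a' b') (Equiv.prodProdProdComm a b a' b') M

/-- Complete positivity of a superoperator. -/
def IsCompletelyPositive {κ η : Type} [Fintype κ] [Fintype η]
    (f : Matrix κ κ ℂ → Matrix η η ℂ) : Prop :=
  ∀ (n : ℕ) (M : Matrix (κ × Fin n) (κ × Fin n) ℂ), M.PosSemidef →
    Matrix.PosSemidef (Matrix.of fun p q : η × Fin n =>
      f (Matrix.of fun a b => M (a, p.2) (b, q.2)) p.1 q.1)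

/-- A quantum channel: a completely positive trace preserving linear map. -/
def IsChannel {κ η : Type} [Fintype κ] [Fintype η]
    (f : Matrix κ κ ℂ → Matrix η η ℂ) : Prop :=
  IsLinearMap ℂ f ∧ IsCompletelyPositive f ∧ ∀ M, (f M).trace = M.trace

/-- Minimum output entropy of a channel. -/
def Smin {κ η : Type} [Fintype κ] [Fintype η] [DecidableEq η]
    (f : Matrix κ κ ℂ → Matrix η η ℂ) : ℝ :=
  sInf { e : ℝ | ∃ ρ : Matrix κ κ ℂ, IsState ρ ∧ e = entropy (f ρ) }

/-- The tensor product `Λ ⊗ Λ'` of two superoperators (defined on all of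
`B(K ⊗ K')` by linearity via matrix units). -/
def tensorChannel {κ η κ' η' : Type} [Fintype κ] [Fintype κ']
    [DecidableEq κ] [DecidableEq κ']
    (f : Matrix κ κ ℂ → Matrix η η ℂ) (g : Matrix κ' κ' ℂ → Matrix η' η' ℂ) :
    Matrix (κ × κ') (κ × κ') ℂ → Matrix (η × η') (η × η') ℂ :=
  fun M => Matrix.of fun p q =>
    ∑ a, ∑ b, ∑ a', ∑ b', M (a, a') (b, b') *
      f (Matrix.single a b 1) p.1 q.1 *
      g (Matrix.single a' b' 1) p.2 q.2

/-- Support of an operator: its range. -/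
def supp {ι : Type} [Fintype ι] (ρ : Matrix ι ι ℂ) : Submodule ℂ (ι → ℂ) :=
  LinearMap.range ρ.mulVecLin


section Spec
variable {n m : Type} [Fintype n] [DecidableEq n] [Fintype m] [DecidableEq m]

lemma charpoly_diagonal {n : Type} [Fintype n] [DecidableEq n] (d : n → ℂ) :
    (diagonal d).charpoly = ∏ i, (X - C (d i)) := by
  have h : charmatrix (diagonal d) = diagonal fun i => (X : ℂ[X]) - C (d i) := by
    ext i j
    by_cases hij : i = j
    · subst hij; simp [charmatrix_apply_eq]
    · simp [charmatrix_apply_ne _ _ _ hij, diagonal_apply_ne _ hij]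
  rw [charpoly, h, det_diagonal]


lemma charpoly_unitary_conj {n : Type} [Fintype n] [DecidableEq n]
    (U : Matrix.unitaryGroup n ℂ) (D : Matrix n n ℂ) :
    ((U : Matrix n n ℂ) * D * (star U : Matrix n n ℂ)).charpoly = D.charpoly := by
  set f := (C : ℂ →+* ℂ[X])
  have hmap : ∀ (A B : Matrix n n ℂ), (A * B).map f = A.map f * B.map f := fun A B =>
    Matrix.map_mul
  have hU : (U : Matrix n n ℂ).map f * (star U : Matrix n n ℂ).map f = 1 := by
    rw [← hmap, (Matrix.mem_unitaryGroup_iff).mp U.2, Matrix.map_one f f.map_zero f.map_one]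
  have hU' : (star U : Matrix n n ℂ).map f * (U : Matrix n n ℂ).map f = 1 := by
    rw [← hmap, (Matrix.mem_unitaryGroup_iff').mp U.2, Matrix.map_one f f.map_zero f.map_one]
  have h : charmatrix ((U : Matrix n n ℂ) * D * (star U : Matrix n n ℂ))
      = (U : Matrix n n ℂ).map f * charmatrix D * (star U : Matrix n n ℂ).map f := by
    unfold charmatrix
    simp only [RingHom.mapMatrix_apply, hmap]
    rw [mul_sub, sub_mul]
    congr 1
    rw [Matrix.mul_assoc]
    have : Matrix.scalar n (X : ℂ[X]) * (star U : Matrix n n ℂ).map f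
        = (star U : Matrix n n ℂ).map f * Matrix.scalar n (X : ℂ[X]) :=
      ((Matrix.scalar_commute (X : ℂ[X]) (fun r => Commute.all _ r) ((star U : Matrix n n ℂ).map f))).eq
    rw [this, ← Matrix.mul_assoc, hU, Matrix.one_mul]
    rw [Matrix.map_mul, Matrix.map_mul]
  rw [charpoly, h, det_mul, det_mul, mul_comm, ← mul_assoc, ← det_mul, hU', det_one, one_mul,
    charpoly]


lemma charpoly_hermitian {A : Matrix n n ℂ} (hA : A.IsHermitian) :
    A.charpoly = ∏ i, (X - C ((hA.eigenvalues i : ℂ))) := by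
  conv_lhs => rw [hA.spectral_theorem, Unitary.conjStarAlgAut_apply]
  rw [charpoly_unitary_conj, charpoly_diagonal]
  rfl


/-- If a Hermitian matrix's charpoly is a product of real linear factors, then summing any
real function over its eigenvalues equals summing over those factors' roots. -/
lemma sum_eigenvalues_of_charpoly {A : Matrix n n ℂ} (hA : A.IsHermitian)
    (μ : m → ℝ) (h : A.charpoly = ∏ j, (X - C ((μ j : ℂ)))) (f : ℝ → ℝ) :
    ∑ i, f (hA.eigenvalues i) = ∑ j, f (μ j) := by
  have h1 : (Finset.univ.val.map fun i => ((hA.eigenvalues i : ℂ)))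
      = Finset.univ.val.map fun j => ((μ j : ℂ)) := by
    have e1 := charpoly_hermitian hA
    rw [h] at e1
    set m1 := Finset.univ.val.map fun i => ((hA.eigenvalues i : ℂ)) with hm1
    set m2 := Finset.univ.val.map fun j => ((μ j : ℂ)) with hm2
    have r1 : (m1.map fun a => X - C a).prod.roots = m1 := roots_multiset_prod_X_sub_C _
    have r2 : (m2.map fun a => X - C a).prod.roots = m2 := roots_multiset_prod_X_sub_C _
    rw [← r1, ← r2]
    congr 1
    rw [hm1, hm2, Multiset.map_map, Multiset.map_map]
    rw [Finset.prod_eq_multiset_prod, Finset.prod_eq_multiset_prod] at e1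
    exact e1.symm
  have h2 : Finset.univ.val.map (hA.eigenvalues) = Finset.univ.val.map μ := by
    apply Multiset.map_injective (Complex.ofReal_injective)
    simpa [Multiset.map_map, Function.comp] using h1
  calc ∑ i, f (hA.eigenvalues i) = ((Finset.univ.val.map hA.eigenvalues).map f).sum := by
        rw [Multiset.map_map]; rfl
    _ = ((Finset.univ.val.map μ).map f).sum := by rw [h2]
    _ = ∑ j, f (μ j) := by rw [Multiset.map_map]; rfl

lemma sum_eigenvalues_eq_one {A : Matrix n n ℂ} (hA : A.IsHermitian) (ht : A.trace = 1) :
    ∑ i, hA.eigenvalues i = 1 := by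
  have h : A.trace = ∑ i, ((hA.eigenvalues i : ℂ)) := by
    conv_lhs => rw [hA.spectral_theorem, Unitary.conjStarAlgAut_apply]
    rw [Matrix.trace_mul_cycle,
      (Matrix.mem_unitaryGroup_iff').mp (hA.eigenvectorUnitary).2, Matrix.one_mul,
      Matrix.trace_diagonal]
    rfl
  rw [ht] at h
  have := h.symm
  rw [← Complex.ofReal_sum] at this
  exact_mod_cast this


lemma conjTranspose_kronecker (A : Matrix n n ℂ) (B : Matrix m m ℂ) :
    (A ⊗ₖ B)ᴴ = Aᴴ ⊗ₖ Bᴴ := by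
  ext ⟨i, k⟩ ⟨j, l⟩
  simp [conjTranspose_apply, kroneckerMap_apply, mul_comm]


lemma isHermitian_kronecker {A : Matrix n n ℂ} {B : Matrix m m ℂ}
    (hA : A.IsHermitian) (hB : B.IsHermitian) : (A ⊗ₖ B).IsHermitian := by
  unfold Matrix.IsHermitian
  rw [conjTranspose_kronecker, hA.eq, hB.eq]


lemma entropy_kronecker {A : Matrix n n ℂ} {B : Matrix m m ℂ}
    (hA : A.PosSemidef) (hB : B.PosSemidef) (htA : A.trace = 1) (htB : B.trace = 1) :
    entropy (A ⊗ₖ B) = entropy A + entropy B := by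
  have hAB : (A ⊗ₖ B).IsHermitian := isHermitian_kronecker hA.1 hB.1
  -- unitary kronecker
  set U := hA.1.eigenvectorUnitary
  set V := hB.1.eigenvectorUnitary
  have hUV : (U : Matrix n n ℂ) ⊗ₖ (V : Matrix m m ℂ) ∈ Matrix.unitaryGroup (n × m) ℂ := by
    rw [Matrix.mem_unitaryGroup_iff']
    have : star ((U : Matrix n n ℂ) ⊗ₖ (V : Matrix m m ℂ))
        = star (U : Matrix n n ℂ) ⊗ₖ star (V : Matrix m m ℂ) := conjTranspose_kronecker _ _
    rw [this, ← Matrix.mul_kronecker_mul, (Matrix.mem_unitaryGroup_iff').mp U.2,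
      (Matrix.mem_unitaryGroup_iff').mp V.2, Matrix.one_kronecker_one]
  have hspec : A ⊗ₖ B
      = ((⟨_, hUV⟩ : Matrix.unitaryGroup (n × m) ℂ) : Matrix (n × m) (n × m) ℂ)
        * diagonal (fun p : n × m => ((hA.1.eigenvalues p.1 * hB.1.eigenvalues p.2 : ℝ) : ℂ))
        * (star (⟨_, hUV⟩ : Matrix.unitaryGroup (n × m) ℂ) : Matrix (n × m) (n × m) ℂ) := by
    conv_lhs => rw [hA.1.spectral_theorem, hB.1.spectral_theorem, Unitary.conjStarAlgAut_apply,
      Unitary.conjStarAlgAut_apply]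
    rw [Matrix.mul_kronecker_mul, Matrix.mul_kronecker_mul]
    congr 1
    · congr 1
      rw [Matrix.diagonal_kronecker_diagonal]
      congr 1
      ext p
      push_cast
      rfl
    · exact (conjTranspose_kronecker _ _).symm
  have hcp : (A ⊗ₖ B).charpoly
      = ∏ p : n × m, (X - C (((hA.1.eigenvalues p.1 * hB.1.eigenvalues p.2 : ℝ) : ℂ))) := by
    conv_lhs => rw [hspec]
    rw [charpoly_unitary_conj]
    exact charpoly_diagonal _
  have key := sum_eigenvalues_of_charpoly hAB
    (fun p : n × m => hA.1.eigenvalues p.1 * hB.1.eigenvalues p.2) hcp Real.negMulLog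
  have hsA := sum_eigenvalues_eq_one hA.1 htA
  have hsB := sum_eigenvalues_eq_one hB.1 htB
  rw [entropy, dif_pos hAB, entropy, dif_pos hA.1, entropy, dif_pos hB.1, key]
  rw [Fintype.sum_prod_type]
  simp_rw [Real.negMulLog_mul, Finset.sum_add_distrib, ← Finset.sum_mul, ← Finset.mul_sum, hsB]
  rw [← Finset.sum_mul, hsA]
  ring

end Spec

open scoped MatrixOrder in
lemma posSemidef_iff_eq_transpose_mul_self {n : Type} [Fintype n] {A : Matrix n n ℂ} :
    A.PosSemidef ↔ ∃ B : Matrix n n ℂ, A = Bᴴ * B := by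
  classical
  refine ⟨fun hA => ?_, fun ⟨B, hB⟩ => hB ▸ posSemidef_conjTranspose_mul_self B⟩
  obtain ⟨X, hX, -, hXA⟩ :=
    CFC.exists_sqrt_of_isSelfAdjoint_of_quasispectrumRestricts hA.isHermitian
      (QuasispectrumRestricts.nnreal_of_nonneg hA.nonneg)
  refine ⟨X, ?_⟩
  rw [← hXA, ← star_eq_conjTranspose, hX.star_eq]

section Part
variable {ι κ : Type} [Fintype ι] [DecidableEq ι] [Fintype κ] [DecidableEq κ]

lemma trRight_kronecker (A : Matrix ι ι ℂ) (B : Matrix κ κ ℂ) (htB : B.trace = 1) :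
    trRight (A ⊗ₖ B) = A := by
  ext i j
  simp only [trRight, of_apply, kroneckerMap_apply, ← Finset.mul_sum]
  have : ∑ k, B k k = 1 := htB
  rw [this, mul_one]


lemma trLeft_kronecker (A : Matrix ι ι ℂ) (B : Matrix κ κ ℂ) (htA : A.trace = 1) :
    trLeft (A ⊗ₖ B) = B := by
  ext k l
  simp only [trLeft, of_apply, kroneckerMap_apply, ← Finset.sum_mul]
  have : ∑ i, A i i = 1 := htA
  rw [this, one_mul]


lemma IsState.kronecker {A : Matrix ι ι ℂ} {B : Matrix κ κ ℂ}
    (hA : IsState A) (hB : IsState B) : IsState (A ⊗ₖ B) := by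
  constructor
  · obtain ⟨P, hP⟩ := posSemidef_iff_eq_transpose_mul_self.mp hA.1
    obtain ⟨Q, hQ⟩ := posSemidef_iff_eq_transpose_mul_self.mp hB.1
    rw [hP, hQ]
    rw [show (Pᴴ * P) ⊗ₖ (Qᴴ * Q) = (Pᴴ ⊗ₖ Qᴴ) * (P ⊗ₖ Q) from
      Matrix.mul_kronecker_mul _ _ _ _, ← conjTranspose_kronecker]
    exact posSemidef_conjTranspose_mul_self _
  · rw [Matrix.trace_kronecker, hA.2, hB.2, one_mul]


end Part

section Part2
variable {ι κ : Type} [Fintype ι] [DecidableEq ι] [Fintype κ]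

lemma trRight_posSemidef_of_pure {π : Matrix (ι × κ) (ι × κ) ℂ} (h : IsPureState π) :
    (trRight π).PosSemidef ∧ (trRight π).trace = 1 := by
  obtain ⟨φ, hφ, rfl⟩ := h
  set M : Matrix ι κ ℂ := Matrix.of fun i k => φ (i, k) with hM
  have key : trRight (vecMulVec φ (star φ)) = M * Mᴴ := by
    ext i j
    simp [trRight, mul_apply, conjTranspose_apply, vecMulVec_apply, hM]
  constructor
  · rw [key]; exact posSemidef_self_mul_conjTranspose _
  · rw [key]
    have : (M * Mᴴ).trace = ∑ p : ι × κ, φ p * star (φ p) := by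
      simp [Matrix.trace, mul_apply, conjTranspose_apply, hM, Fintype.sum_prod_type,
        Matrix.diag]
    rw [this]
    rw [show (1 : ℂ) = star φ ⬝ᵥ φ from hφ.symm]
    simp [dotProduct, mul_comm]


lemma entropy_nonneg {A : Matrix ι ι ℂ} (hA : A.PosSemidef) (ht : A.trace = 1) :
    0 ≤ entropy A := by
  have hs : ∑ i, hA.1.eigenvalues i = 1 := by
    have h : A.trace = ∑ i, ((hA.1.eigenvalues i : ℂ)) := by
      conv_lhs => rw [hA.1.spectral_theorem, Unitary.conjStarAlgAut_apply]
      rw [Matrix.trace_mul_cycle,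
        (Matrix.mem_unitaryGroup_iff').mp (hA.1.eigenvectorUnitary).2, Matrix.one_mul,
        Matrix.trace_diagonal]
      rfl
    rw [ht] at h
    have := h.symm
    rw [← Complex.ofReal_sum] at this
    exact_mod_cast this
  rw [entropy, dif_pos hA.1]
  refine Finset.sum_nonneg fun i _ => Real.negMulLog_nonneg (hA.eigenvalues_nonneg i) ?_
  calc hA.1.eigenvalues i ≤ ∑ j, hA.1.eigenvalues j :=
        Finset.single_le_sum (fun j _ => hA.eigenvalues_nonneg j) (Finset.mem_univ i)
    _ = 1 := hs


lemma smul_vecMulVec (c : ℂ) (f : ι → ℂ) :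
    vecMulVec (c • f) (star (c • f)) = (c * star c) • vecMulVec f (star f) := by
  ext x y
  simp only [vecMulVec_apply, Pi.smul_apply, Pi.star_apply, star_smul, Matrix.smul_apply, smul_eq_mul]
  ring


/-- Every state admits a pure-state ensemble. -/
lemma ensemble_exists {ρ : Matrix ι ι ℂ} (hρ : IsState ρ) :
    ∃ (n : ℕ) (p : Fin (n + 1) → ℝ) (π : Fin (n + 1) → Matrix ι ι ℂ),
      (∀ i, 0 < p i) ∧ (∀ i, IsPureState (π i)) ∧ (∑ i, (p i : ℂ) • π i) = ρ := by
  obtain ⟨B, hB⟩ := posSemidef_iff_eq_transpose_mul_self.mp hρ.1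
  set φ : ι → ι → ℂ := fun k x => star (B k x) with hφ
  set w : ι → ℝ := fun k => ∑ x, Complex.normSq (B k x) with hw
  have hwnn : ∀ k, 0 ≤ w k := fun k => Finset.sum_nonneg fun x _ => Complex.normSq_nonneg _
  have hwc : ∀ k, (star (φ k) ⬝ᵥ φ k : ℂ) = (w k : ℝ) := by
    intro k
    simp only [dotProduct, Pi.star_apply, hφ, star_star, hw]
    push_cast
    congr 1
    ext x
    rw [Complex.normSq_eq_conj_mul_self]
    exact mul_comm _ _
  have hρsum : ρ = ∑ k, vecMulVec (φ k) (star (φ k)) := by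
    ext x y
    rw [hB]
    simp only [Matrix.mul_apply, conjTranspose_apply, Matrix.sum_apply, vecMulVec_apply, hφ,
      Pi.star_apply, star_star]
  have hφ0 : ∀ k, w k = 0 → φ k = 0 := by
    intro k hk
    ext x
    have : Complex.normSq (B k x) = 0 :=
      (Finset.sum_eq_zero_iff_of_nonneg fun x _ => Complex.normSq_nonneg _).mp hk x
        (Finset.mem_univ x)
    simp [hφ, Complex.normSq_eq_zero.mp this]
  set T : Finset ι := Finset.univ.filter fun k => 0 < w k with hT
  have hTne : T.Nonempty := by
    by_contra hc
    rw [Finset.not_nonempty_iff_eq_empty] at hc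
    have hall : ∀ k, w k = 0 := by
      intro k
      by_contra hk
      have : k ∈ T := Finset.mem_filter.mpr
        ⟨Finset.mem_univ k, lt_of_le_of_ne (hwnn k) (Ne.symm hk)⟩
      rw [hc] at this
      exact absurd this (Finset.notMem_empty k)
    have : ρ = 0 := by
      rw [hρsum]
      refine Finset.sum_eq_zero fun k _ => ?_
      rw [hφ0 k (hall k)]
      ext x y
      simp [vecMulVec_apply]
    rw [this] at hρ
    simpa using hρ.2
  obtain ⟨n, hn⟩ : ∃ n, T.card = n + 1 :=
    ⟨T.card - 1, (Nat.succ_pred_eq_of_pos (Finset.card_pos.mpr hTne)).symm⟩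
  set e : Fin (n + 1) ≃ T := ((T.equivFin).trans (finCongr hn)).symm with he
  have hmem : ∀ i : Fin (n + 1), 0 < w (e i) := fun i => (Finset.mem_filter.mp (e i).2).2
  set c : Fin (n + 1) → ℂ := fun i => (((Real.sqrt (w (e i)) : ℝ) : ℂ))⁻¹ with hc
  have hstarc : ∀ i, star (c i) = c i := by
    intro i
    rw [hc, star_inv₀]
    congr 1
    simp [Complex.star_def]
  have hcc : ∀ i, ((w (e i) : ℝ) : ℂ) * (c i * star (c i)) = 1 := by
    intro i
    rw [hstarc, hc, ← mul_inv, ← Complex.ofReal_mul, Real.mul_self_sqrt (hwnn _),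
      mul_inv_cancel₀]
    exact_mod_cast (hmem i).ne'
  refine ⟨n, fun i => w (e i), fun i =>
    vecMulVec (c i • φ (e i)) (star (c i • φ (e i))), hmem, ?_, ?_⟩
  · intro i
    refine ⟨_, ?_, rfl⟩
    rw [star_smul, smul_dotProduct, dotProduct_smul, hwc]
    rw [smul_eq_mul, smul_eq_mul]
    rw [show star (c i) * (c i * ((w (e i) : ℝ) : ℂ))
      = ((w (e i) : ℝ) : ℂ) * (c i * star (c i)) by ring, hcc i]
  · have hterm : ∀ i : Fin (n + 1),
        ((w (e i) : ℝ) : ℂ) • vecMulVec (c i • φ (e i)) (star (c i • φ (e i)))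
          = vecMulVec (φ (e i)) (star (φ (e i))) := by
      intro i
      rw [smul_vecMulVec, smul_smul, hcc, one_smul]
    calc (∑ i, ((w (e i) : ℝ) : ℂ) • vecMulVec (c i • φ (e i)) (star (c i • φ (e i))))
        = ∑ i, vecMulVec (φ (e i)) (star (φ (e i))) := Finset.sum_congr rfl fun i _ => hterm i
      _ = ∑ t : T, vecMulVec (φ t) (star (φ t)) := Fintype.sum_equiv e _ _ fun i => rfl
      _ = ∑ k ∈ T, vecMulVec (φ k) (star (φ k)) := Finset.sum_coe_sort T (fun k => vecMulVec (φ k) (star (φ k)))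
      _ = ∑ k, vecMulVec (φ k) (star (φ k)) := by
          refine Finset.sum_subset (Finset.subset_univ T) fun k _ hk => ?_
          have hk0 : w k = 0 := by
            by_contra h0
            exact hk (Finset.mem_filter.mpr
              ⟨Finset.mem_univ k, lt_of_le_of_ne (hwnn k) (Ne.symm h0)⟩)
          rw [hφ0 k hk0]
          ext x y
          simp [vecMulVec_apply]
      _ = ρ := hρsum.symm


end Part2

section Main
variable {a b a' b' : Type} [Fintype a] [Fintype b] [Fintype a'] [Fintype b']
  [DecidableEq a] [DecidableEq b] [DecidableEq a'] [DecidableEq b']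

lemma reorder_apply (M : Matrix ((a × b) × (a' × b')) ((a × b) × (a' × b')) ℂ)
    (i : a) (i' : a') (k : b) (k' : b') (j : a) (j' : a') (l : b) (l' : b') :
    reorder M ((i, i'), (k, k')) ((j, j'), (l, l')) = M ((i, k), (i', k')) ((j, l), (j', l')) :=
  rfl

lemma isPureState_reorder_kron {π : Matrix ((a × b)) ((a × b)) ℂ}
    {π' : Matrix (a' × b') (a' × b') ℂ} (h : IsPureState π) (h' : IsPureState π') :
    IsPureState (reorder (π ⊗ₖ π')) := by
  obtain ⟨φ, hφ, rfl⟩ := h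
  obtain ⟨ψ, hψ, rfl⟩ := h'
  refine ⟨fun x => φ (x.1.1, x.2.1) * ψ (x.1.2, x.2.2), ?_, ?_⟩
  · have key : (star (fun x : (a × a') × (b × b') => φ (x.1.1, x.2.1) * ψ (x.1.2, x.2.2))
        ⬝ᵥ fun x => φ (x.1.1, x.2.1) * ψ (x.1.2, x.2.2))
        = (star φ ⬝ᵥ φ) * (star ψ ⬝ᵥ ψ) := by
      simp only [dotProduct, Pi.star_apply, star_mul']
      rw [Finset.sum_mul_sum]
      rw [← Equiv.sum_comp (Equiv.prodProdProdComm a b a' b')]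
      rw [Fintype.sum_prod_type]
      refine Finset.sum_congr rfl fun u _ => Finset.sum_congr rfl fun v _ => ?_
      simp [Equiv.prodProdProdComm]
      ring
    rw [key, hφ, hψ, one_mul]
  · ext ⟨⟨i, i'⟩, ⟨k, k'⟩⟩ ⟨⟨j, j'⟩, ⟨l, l'⟩⟩
    rw [reorder_apply]
    simp only [kroneckerMap_apply, vecMulVec_apply, Pi.star_apply, star_mul']
    ring

lemma trRight_reorder_kron (π : Matrix ((a × b)) ((a × b)) ℂ)
    (π' : Matrix (a' × b') (a' × b') ℂ) :
    trRight (reorder (π ⊗ₖ π')) = trRight π ⊗ₖ trRight π' := by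
  ext ⟨i, i'⟩ ⟨j, j'⟩
  show (∑ k : b × b', reorder (π ⊗ₖ π') ((i, i'), k) ((j, j'), k))
    = (∑ k, π (i, k) (j, k)) * ∑ k', π' (i', k') (j', k')
  rw [Finset.sum_mul_sum, Fintype.sum_prod_type]
  rfl

lemma pureEnt_reorder_kron {π : Matrix ((a × b)) ((a × b)) ℂ}
    {π' : Matrix (a' × b') (a' × b') ℂ} (h : IsPureState π) (h' : IsPureState π') :
    pureEnt (reorder (π ⊗ₖ π')) = pureEnt π + pureEnt π' := by
  obtain ⟨h1, h2⟩ := trRight_posSemidef_of_pure h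
  obtain ⟨h1', h2'⟩ := trRight_posSemidef_of_pure h'
  rw [pureEnt, trRight_reorder_kron]
  exact entropy_kronecker h1 h1' h2 h2'

lemma pureEnt_nonneg {ι κ : Type} [Fintype ι] [Fintype κ] [DecidableEq ι]
    {π : Matrix (ι × κ) (ι × κ) ℂ} (h : IsPureState π) : 0 ≤ pureEnt π := by
  obtain ⟨h1, h2⟩ := trRight_posSemidef_of_pure h
  exact entropy_nonneg h1 h2

end Main

def EmSet {ι κ : Type} [Fintype ι] [Fintype κ] [DecidableEq ι]
    (ρ : Matrix (ι × κ) (ι × κ) ℂ) : Set ℝ :=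
  { e : ℝ | ∃ (n : ℕ) (p : Fin (n + 1) → ℝ)
      (π : Fin (n + 1) → Matrix (ι × κ) (ι × κ) ℂ),
    (∀ i, 0 < p i) ∧ (∀ i, IsPureState (π i)) ∧
    (∑ i, (p i : ℂ) • π i) = ρ ∧
    e = Finset.univ.inf' Finset.univ_nonempty fun i => pureEnt (π i) }

lemma Em_eq {ι κ : Type} [Fintype ι] [Fintype κ] [DecidableEq ι]
    (ρ : Matrix (ι × κ) (ι × κ) ℂ) : Em ρ = sInf (EmSet ρ) := rfl

lemma EmSet_nonneg {ι κ : Type} [Fintype ι] [Fintype κ] [DecidableEq ι]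
    {ρ : Matrix (ι × κ) (ι × κ) ℂ} {x : ℝ} (hx : x ∈ EmSet ρ) : 0 ≤ x := by
  obtain ⟨n, p, π, hp, hπ, hsum, rfl⟩ := hx
  exact Finset.le_inf' _ _ fun i _ => pureEnt_nonneg (hπ i)

lemma EmSet_bddBelow {ι κ : Type} [Fintype ι] [Fintype κ] [DecidableEq ι]
    (ρ : Matrix (ι × κ) (ι × κ) ℂ) : BddBelow (EmSet ρ) :=
  ⟨0, fun _ hx => EmSet_nonneg hx⟩

lemma EmSet_nonempty {ι κ : Type} [Fintype ι] [Fintype κ] [DecidableEq ι] [DecidableEq κ]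
    {ρ : Matrix (ι × κ) (ι × κ) ℂ} (hρ : IsState ρ) : (EmSet ρ).Nonempty := by
  obtain ⟨n, p, π, hp, hπ, hsum⟩ := ensemble_exists hρ
  exact ⟨_, n, p, π, hp, hπ, hsum, rfl⟩

section Main2
variable {a b a' b' : Type} [Fintype a] [Fintype b] [Fintype a'] [Fintype b']
  [DecidableEq a] [DecidableEq b] [DecidableEq a'] [DecidableEq b']

lemma add_mem_EmSet_prod {ρ : Matrix (a × b) (a × b) ℂ} {ρ' : Matrix (a' × b') (a' × b') ℂ}
    {e e' : ℝ} (he : e ∈ EmSet ρ) (he' : e' ∈ EmSet ρ') :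
    e + e' ∈ EmSet (reorder (ρ ⊗ₖ ρ')) := by
  obtain ⟨n, p, π, hp, hπ, hsum, rfl⟩ := he
  obtain ⟨n', q, π', hq, hπ', hsum', rfl⟩ := he'
  set E : Fin (n * (n' + 1) + n' + 1) ≃ Fin (n + 1) × Fin (n' + 1) :=
    (finCongr (by ring : n * (n' + 1) + n' + 1 = (n + 1) * (n' + 1))).trans
      finProdFinEquiv.symm with hE
  refine ⟨n * (n' + 1) + n', fun k => p (E k).1 * q (E k).2,
    fun k => reorder (π (E k).1 ⊗ₖ π' (E k).2), fun k => mul_pos (hp _) (hq _),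
    fun k => isPureState_reorder_kron (hπ _) (hπ' _), ?_, ?_⟩
  · have step1 : (∑ k, (((p (E k).1 * q (E k).2 : ℝ)) : ℂ) •
        reorder (π (E k).1 ⊗ₖ π' (E k).2))
        = ∑ ij : Fin (n + 1) × Fin (n' + 1), (((p ij.1 * q ij.2 : ℝ)) : ℂ) •
            reorder (π ij.1 ⊗ₖ π' ij.2) :=
      Fintype.sum_equiv E _ _ fun k => rfl
    rw [step1]
    ext ⟨⟨i, i'⟩, ⟨k, k'⟩⟩ ⟨⟨j, j'⟩, ⟨l, l'⟩⟩
    rw [reorder_apply]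
    simp only [Matrix.sum_apply, Matrix.smul_apply, reorder_apply, kroneckerMap_apply,
      smul_eq_mul]
    have hρe : ρ ((i, k)) ((j, l)) = ∑ u, (p u : ℂ) * π u (i, k) (j, l) := by
      rw [← hsum]; simp [Matrix.sum_apply]
    have hρ'e : ρ' ((i', k')) ((j', l')) = ∑ v, (q v : ℂ) * π' v (i', k') (j', l') := by
      rw [← hsum']; simp [Matrix.sum_apply]
    rw [hρe, hρ'e, Finset.sum_mul_sum, Fintype.sum_prod_type]
    refine Finset.sum_congr rfl fun u _ => Finset.sum_congr rfl fun v _ => ?_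
    push_cast
    ring
  · have step2 : (Finset.univ.inf' Finset.univ_nonempty fun k =>
        pureEnt (reorder (π (E k).1 ⊗ₖ π' (E k).2)))
        = Finset.univ.inf' Finset.univ_nonempty fun k =>
            pureEnt (π (E k).1) + pureEnt (π' (E k).2) := by
      refine Finset.inf'_congr _ rfl fun k _ => pureEnt_reorder_kron (hπ _) (hπ' _)
    rw [step2]
    apply le_antisymm
    · apply Finset.le_inf'
      intro k _
      exact add_le_add (Finset.inf'_le _ (Finset.mem_univ _))
        (Finset.inf'_le _ (Finset.mem_univ _))
    · obtain ⟨i₀, -, hi₀⟩ :=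
        Finset.exists_mem_eq_inf' Finset.univ_nonempty fun i => pureEnt (π i)
      obtain ⟨j₀, -, hj₀⟩ :=
        Finset.exists_mem_eq_inf' Finset.univ_nonempty fun j => pureEnt (π' j)
      have hle := Finset.inf'_le (fun k => pureEnt (π (E k).1) + pureEnt (π' (E k).2))
        (Finset.mem_univ (E.symm (i₀, j₀)))
      rw [Equiv.apply_symm_apply] at hle
      rw [hi₀, hj₀]
      exact hle


end Main2

/-- (ii) ⟹ (iii): strong superadditivity of `E_m` (for all spaces and states)
implies additivity of `E_m`. -/
theorem Em_strong_superadditive_implies_Em_additive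
    (hssa : ∀ (a b a' b' : Type) [Fintype a] [Fintype b] [Fintype a'] [Fintype b']
      [DecidableEq a] [DecidableEq b] [DecidableEq a'] [DecidableEq b'],
      ∀ σ : Matrix ((a × b) × (a' × b')) ((a × b) × (a' × b')) ℂ,
        IsState σ →
        Em (reorder σ) ≥ Em (trRight σ) + Em (trLeft σ))
    {a b a' b' : Type} [Fintype a] [Fintype b] [Fintype a'] [Fintype b']
    [DecidableEq a] [DecidableEq b] [DecidableEq a'] [DecidableEq b']
    (ρ : Matrix (a × b) (a × b) ℂ) (ρ' : Matrix (a' × b') (a' × b') ℂ)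
    (hρ : IsState ρ) (hρ' : IsState ρ') :
    Em (reorder (ρ ⊗ₖ ρ')) = Em ρ + Em ρ' := by
  have hS := IsState.kronecker hρ hρ'
  have hlow := hssa a b a' b' (ρ ⊗ₖ ρ') hS
  rw [trRight_kronecker ρ ρ' hρ'.2, trLeft_kronecker ρ ρ' hρ.2] at hlow
  have hne := EmSet_nonempty hρ
  have hne' := EmSet_nonempty hρ'
  have key : ∀ e ∈ EmSet ρ, ∀ e' ∈ EmSet ρ', Em (reorder (ρ ⊗ₖ ρ')) ≤ e + e' := by
    intro e he e' he'
    rw [Em_eq]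
    exact csInf_le (EmSet_bddBelow _) (add_mem_EmSet_prod he he')
  have h1 : ∀ e ∈ EmSet ρ, Em (reorder (ρ ⊗ₖ ρ')) - e ≤ sInf (EmSet ρ') :=
    fun e he => le_csInf hne' fun e' he' => by linarith [key e he e' he']
  have h2 : Em (reorder (ρ ⊗ₖ ρ')) - sInf (EmSet ρ') ≤ sInf (EmSet ρ) :=
    le_csInf hne fun e he => by linarith [h1 e he]
  rw [Em_eq ρ, Em_eq ρ'] at hlow ⊢
  linarith

end QAdditivity
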